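/- arXiv:2010.05513 — 3 statements merged into one kernel-verified Lean document; each statement's English description precedes it below -/
import Mathlib

section
/- Let A and B be unital C*-algebras and Φ : A → B a unital linear map which is 2-positive, meaning that the induced map on 2×2 matrices over A, sending (a_{ij})_{i,j=1,2} to (Φ(a_{ij}))_{i,j=1,2}, maps positive elements of M_2(A) to positive elements of M_2(B). Then Φ satisfies the Kadison–Schwarz inequality: Φ(a)* Φ(a) ≤ Φ(a* a) for every a ∈ A. -/
/-- A unital 2-positive linear map between unital C*-algebras satisfies the
Kadison–Schwarz inequality `Φ(a)* Φ(a) ≤ Φ(a* a)`.  2-positivity is expressed via the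
entrywise-induced map on `2×2` matrices, positivity of a matrix `x` over a C*-algebra being
`∃ y, x = star y * y`. -/
theorem kadison_schwarz_of_two_positive
    {A B : Type*} [CStarAlgebra A] [CStarAlgebra B]
    [PartialOrder B] [StarOrderedRing B]
    (Φ : A →ₗ[ℂ] B) (hunital : Φ 1 = 1)
    (h2pos : ∀ M : Matrix (Fin 2) (Fin 2) A, (∃ y, M = star y * y) →
      ∃ z : Matrix (Fin 2) (Fin 2) B, M.map Φ = star z * z) :
    ∀ a : A, star (Φ a) * Φ a ≤ Φ (star a * a) := by
  intro a
  set M : Matrix (Fin 2) (Fin 2) A := !![1, a; star a, star a * a] with hM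
  have hMpos : ∃ y, M = star y * y := by
    refine ⟨!![1, a; 0, 0], ?_⟩
    ext i j
    fin_cases i <;> fin_cases j <;>
      simp [hM, Matrix.mul_apply, Fin.sum_univ_two, Matrix.star_apply]
  obtain ⟨z, hz⟩ := h2pos M hMpos
  set P := M.map Φ with hP
  have hPsa : star P = P := by
    rw [hz, star_mul, star_star]
  have hstar : Φ (star a) = star (Φ a) := by
    have h := congrArg (fun Q : Matrix (Fin 2) (Fin 2) B => Q 1 0) hPsa
    simpa [hP, hM, Matrix.star_apply, Matrix.map_apply] using h.symm
  set x : Matrix (Fin 2) (Fin 2) B := !![Φ a, 0; -1, 0] with hx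
  set u := z * x with hu
  have hconj : star u * u = star x * P * x := by
    rw [hu, star_mul, mul_assoc, ← mul_assoc (star z), ← hz, ← mul_assoc]
  have key : (star u * u) 0 0 = Φ (star a * a) - star (Φ a) * Φ a := by
    rw [hconj]
    simp [Matrix.mul_apply, Fin.sum_univ_two, Matrix.star_apply, hP, hM, hx,
      Matrix.map_apply, hunital, hstar]
    abel
  have hpos : 0 ≤ (star u * u) 0 0 := by
    have : (star u * u) 0 0 = star (u 0 0) * u 0 0 + star (u 1 0) * u 1 0 := by
      simp [Matrix.mul_apply, Fin.sum_univ_two, Matrix.star_apply]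
    rw [this]
    exact add_nonneg (star_mul_self_nonneg _) (star_mul_self_nonneg _)
  rw [key] at hpos
  exact sub_nonneg.mp hpos
end

section
/- (Löwner–Heinz) Let A and B be positive bounded operators on a complex Hilbert space with A ≤ B. Then for every α ∈ [0,1], A^α ≤ B^α, where the powers are defined by the continuous functional calculus. -/
open MeasureTheory Set NNReal

namespace LoewnerHeinzAux

attribute [local instance] Measure.Subtype.measureSpace

/-! ### Scalar facts -/

lemma integrableOn_bound {α : ℝ} (h0 : 0 < α) (h1 : α < 1) {M : ℝ} (hM : 0 ≤ M) :
    IntegrableOn (fun t : ℝ => t ^ (α - 1) * (M / (M + t))) (Ioi 0) := by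
  have hmeas : AEStronglyMeasurable (fun t : ℝ => t ^ (α - 1) * (M / (M + t)))
      (volume.restrict (Ioi (0:ℝ))) := by
    refine Measurable.aestronglyMeasurable ?_
    fun_prop
  have hnonneg : ∀ t ∈ Ioi (0:ℝ), 0 ≤ t ^ (α - 1) * (M / (M + t)) := by
    intro t ht
    have ht' : (0:ℝ) < t := ht
    positivity
  rw [← Ioc_union_Ioi_eq_Ioi (zero_le_one : (0:ℝ) ≤ 1)]
  refine IntegrableOn.union ?_ ?_
  · have hint : IntegrableOn (fun t : ℝ => t ^ (α - 1)) (Ioc 0 1) := by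
      have h2 := (intervalIntegral.integrableOn_Ioo_rpow_iff (zero_lt_two)).mpr
        (by linarith : (-1:ℝ) < α - 1)
      exact h2.mono_set (Ioc_subset_Ioo_right one_lt_two |>.trans (Ioo_subset_Ioo_left le_rfl))
    refine Integrable.mono hint (hmeas.mono_set Ioc_subset_Ioi_self) ?_
    filter_upwards [ae_restrict_mem measurableSet_Ioc] with t ht
    have ht0 : (0:ℝ) < t := ht.1
    rw [Real.norm_eq_abs, Real.norm_eq_abs, abs_of_nonneg (hnonneg t ht0),
      abs_of_nonneg (Real.rpow_nonneg ht0.le _)]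
    have hd : M / (M + t) ≤ 1 := by
      rw [div_le_one (by linarith)]; linarith
    calc t ^ (α - 1) * (M / (M + t)) ≤ t ^ (α - 1) * 1 := by
          have := Real.rpow_nonneg ht0.le (α - 1); gcongr
      _ = t ^ (α - 1) := mul_one _
  · have hint : IntegrableOn (fun t : ℝ => M * t ^ (α - 2)) (Ioi 1) :=
      (integrableOn_Ioi_rpow_of_lt (by linarith) zero_lt_one).const_mul M
    refine Integrable.mono hint (hmeas.mono_set (Ioi_subset_Ioi zero_le_one)) ?_
    filter_upwards [ae_restrict_mem measurableSet_Ioi] with t ht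
    have ht0 : (0:ℝ) < t := lt_trans zero_lt_one ht
    rw [Real.norm_eq_abs, Real.norm_eq_abs, abs_of_nonneg (hnonneg t ht0),
      abs_of_nonneg (by positivity : (0:ℝ) ≤ M * t ^ (α - 2))]
    have h2 : M / (M + t) ≤ M / t := by
      gcongr
      linarith
    calc t ^ (α - 1) * (M / (M + t)) ≤ t ^ (α - 1) * (M / t) := by
          have := Real.rpow_nonneg ht0.le (α - 1); gcongr
      _ = M * t ^ (α - 2) := by
          rw [div_eq_mul_inv, ← Real.rpow_neg_one t, ← mul_assoc, mul_comm (t ^ (α-1)) M,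
            mul_assoc, ← Real.rpow_add ht0, show α - 1 + -1 = α - 2 by ring]

lemma I_pos {α : ℝ} (h0 : 0 < α) (h1 : α < 1) :
    0 < ∫ t in Ioi (0:ℝ), t ^ (α - 1) / (1 + t) := by
  have hint : IntegrableOn (fun t : ℝ => t ^ (α - 1) / (1 + t)) (Ioi 0) := by
    have := integrableOn_bound h0 h1 (zero_le_one (α := ℝ))
    refine this.congr_fun (fun t ht => ?_) measurableSet_Ioi
    beta_reduce
    rw [one_div, div_eq_mul_inv]
  rw [setIntegral_pos_iff_support_of_nonneg_ae]
  · refine lt_of_lt_of_le ?_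
      (measure_mono (show Ioi (0:ℝ) ⊆ (Function.support fun t => t ^ (α-1) / (1+t)) ∩ Ioi 0
        from fun t ht => ⟨Function.mem_support.mpr
          (by have ht0 : (0:ℝ) < t := ht; positivity), ht⟩))
    rw [Real.volume_Ioi (a := (0:ℝ))]; exact ENNReal.zero_lt_top
  · filter_upwards [ae_restrict_mem measurableSet_Ioi] with t ht
    have ht0 : (0:ℝ) < t := ht
    positivity
  · exact hint

lemma scalar_repr {α : ℝ} (h0 : 0 < α) (h1 : α < 1) {x : ℝ} (hx : 0 ≤ x) :
    ∫ t in Ioi (0:ℝ), t ^ (α - 1) * (x / (x + t)) =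
      (∫ t in Ioi (0:ℝ), t ^ (α - 1) / (1 + t)) * x ^ α := by
  rcases eq_or_lt_of_le hx with rfl|hx
  · simp [Real.zero_rpow h0.ne']
  · have key := integral_comp_mul_left_Ioi
      (g := fun t => t ^ (α - 1) * (x / (x + t))) 0 hx
    rw [mul_zero] at key
    have congr1 : ∫ s in Ioi (0:ℝ), (x * s) ^ (α - 1) * (x / (x + x * s)) =
        ∫ s in Ioi (0:ℝ), x ^ (α - 1) * (s ^ (α - 1) / (1 + s)) := by
      refine setIntegral_congr_fun measurableSet_Ioi (fun s hs => ?_)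
      have hs0 : (0:ℝ) < s := hs
      rw [Real.mul_rpow hx.le hs0.le, show x + x * s = x * (1 + s) by ring]
      have h1s : (0:ℝ) < 1 + s := by linarith
      field_simp
    rw [congr1, integral_const_mul, smul_eq_mul] at key
    have hxx : x * x ^ (α - 1) = x ^ α := by
      nth_rewrite 1 [← Real.rpow_one x]
      rw [← Real.rpow_add hx]
      norm_num
    have key2 : (∫ t in Ioi (0:ℝ), t ^ (α - 1) * (x / (x + t)))
        = x * (x ^ (α - 1) * ∫ s in Ioi (0:ℝ), s ^ (α - 1) / (1 + s)) := by
      rw [key]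
      field_simp
      congr 1; ext t; ring
    rw [key2, ← mul_assoc, hxx, mul_comm]

/-! ### Operator monotonicity for the resolvent kernel -/

variable {A : Type*} [CStarAlgebra A] [PartialOrder A] [StarOrderedRing A]

lemma cfc_real_inv_eq_nnreal {v : A} (hv : 0 ≤ v) :
    cfc (·⁻¹ : ℝ → ℝ) v = cfc (·⁻¹ : ℝ≥0 → ℝ≥0) v := by
  rw [cfc_nnreal_eq_real (·⁻¹ : ℝ≥0 → ℝ≥0) v hv]
  refine cfc_congr (fun x hx => ?_)
  have hx0 : 0 ≤ x := spectrum_nonneg_of_nonneg hv hx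
  simp [NNReal.coe_inv, Real.coe_toNNReal x hx0]

lemma cfc_inv_antitone {a b : A} (ha : 0 ≤ a) (hb : 0 ≤ b) (hab : a ≤ b) {t : ℝ} (ht : 0 < t) :
    cfc (·⁻¹ : ℝ → ℝ) (b + algebraMap ℝ A t) ≤ cfc (·⁻¹ : ℝ → ℝ) (a + algebraMap ℝ A t) := by
  have hT : (0:A) ≤ algebraMap ℝ A t := by
    have := smul_le_smul_of_nonneg_left (zero_le_one (α := A)) ht.le
    simpa [Algebra.algebraMap_eq_smul_one] using this
  have hTu : IsUnit (algebraMap ℝ A t) :=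
    (isUnit_iff_ne_zero.mpr ht.ne').map (algebraMap ℝ A)
  have ha' : (0:A) ≤ a + algebraMap ℝ A t := add_nonneg ha hT
  have hb' : (0:A) ≤ b + algebraMap ℝ A t := add_nonneg hb hT
  have hau : IsUnit (a + algebraMap ℝ A t) :=
    CStarAlgebra.isUnit_of_le _ (le_add_of_nonneg_left ha) ⟨hT, hTu⟩
  have hab' : a + algebraMap ℝ A t ≤ b + algebraMap ℝ A t := by
    exact add_le_add_left hab _
  have := CStarAlgebra.rpow_neg_one_le_rpow_neg_one hab' ⟨ha', hau⟩
  rw [CFC.rpow_neg_one_eq_cfc_inv, CFC.rpow_neg_one_eq_cfc_inv] at this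
  rwa [cfc_real_inv_eq_nnreal ha', cfc_real_inv_eq_nnreal hb']

lemma cfc_kern_eq {c : A} (hc : 0 ≤ c) {t : ℝ} (ht : 0 < t) :
    cfc (fun x : ℝ => x / (x + t)) c =
      1 - t • cfc (·⁻¹ : ℝ → ℝ) (c + algebraMap ℝ A t) := by
  have hsp : ∀ x ∈ spectrum ℝ c, 0 ≤ x := fun x hx => spectrum_nonneg_of_nonneg hc hx
  have hcont : ContinuousOn (fun x : ℝ => (x + t)⁻¹) (spectrum ℝ c) := by
    refine ContinuousOn.inv₀ (by fun_prop) (fun x hx => by have := hsp x hx; positivity)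
  have h1 : cfc (fun x : ℝ => x / (x + t)) c = cfc (fun x : ℝ => 1 - t * (x + t)⁻¹) c := by
    refine cfc_congr (fun x hx => ?_)
    have hx0 := hsp x hx
    have hxt : x + t ≠ 0 := by positivity
    field_simp
    ring
  have h2 : cfc (fun x : ℝ => 1 - t * (x + t)⁻¹) c
      = cfc (fun _ : ℝ => (1:ℝ)) c - cfc (fun x : ℝ => t * (x + t)⁻¹) c := by
    exact cfc_sub _ _ c (by fun_prop) (hcont.const_smul t)
  have h3 : cfc (fun x : ℝ => t * (x + t)⁻¹) c = t • cfc (fun x : ℝ => (x + t)⁻¹) c :=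
    cfc_const_mul t _ c hcont
  have h4 : cfc (fun x : ℝ => (x + t)⁻¹) c = cfc (·⁻¹ : ℝ → ℝ) (c + algebraMap ℝ A t) := by
    have hg : cfc (fun x : ℝ => x + t) c = c + algebraMap ℝ A t := by
      rw [cfc_add c _ _ (by fun_prop) (by fun_prop), cfc_id' ℝ c, cfc_const t c]
    have hgc : ContinuousOn (·⁻¹ : ℝ → ℝ) ((fun x : ℝ => x + t) '' spectrum ℝ c) := by
      refine ContinuousOn.inv₀ continuousOn_id (fun x hx => ?_)
      simp only [mem_image] at hx
      obtain ⟨y, hy, rfl⟩ := hx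
      have := hsp y hy
      positivity
    have hcomp := cfc_comp' (·⁻¹ : ℝ → ℝ) (fun x : ℝ => x + t) c hgc (by fun_prop)
    rw [hg] at hcomp
    rw [← hcomp]
  rw [h1, h2, h3, h4, cfc_const_one ℝ c]

lemma cfc_kern_mono {a b : A} (ha : 0 ≤ a) (hb : 0 ≤ b) (hab : a ≤ b) {t c : ℝ}
    (ht : 0 < t) (hc : 0 ≤ c) :
    cfc (fun x : ℝ => c * (x / (x + t))) a ≤ cfc (fun x : ℝ => c * (x / (x + t))) b := by
  have hconta : ContinuousOn (fun x : ℝ => x / (x + t)) (spectrum ℝ a) := by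
    refine ContinuousOn.div (by fun_prop) (by fun_prop)
      (fun x hx => by have := spectrum_nonneg_of_nonneg ha hx; positivity)
  have hcontb : ContinuousOn (fun x : ℝ => x / (x + t)) (spectrum ℝ b) := by
    refine ContinuousOn.div (by fun_prop) (by fun_prop)
      (fun x hx => by have := spectrum_nonneg_of_nonneg hb hx; positivity)
  rw [cfc_const_mul c _ a hconta, cfc_const_mul c _ b hcontb]
  refine smul_le_smul_of_nonneg_left ?_ hc
  rw [cfc_kern_eq ha ht, cfc_kern_eq hb ht]
  refine sub_le_sub_left ?_ 1
  exact smul_le_smul_of_nonneg_left (cfc_inv_antitone ha hb hab ht) ht.le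

/-! ### Integral representation of `rpow` via the CFC -/

lemma integrable_subtype_iff {s : Set ℝ} (hs : MeasurableSet s) {E : Type*}
    [NormedAddCommGroup E] (g : ℝ → E) :
    Integrable (fun x : s => g ↑x) ↔ IntegrableOn g s := by
  rw [IntegrableOn, ← map_comap_subtype_coe hs,
    (MeasurableEmbedding.subtype_coe hs).integrable_map_iff]
  rfl

lemma kern_uncurry_cont (a : A) (ha : 0 ≤ a) {α : ℝ} :
    Continuous (Function.uncurry fun (t : ↥(Ioi (0:ℝ))) (x : ↥(spectrum ℝ a)) =>
      (t:ℝ) ^ (α - 1) * ((x:ℝ) / ((x:ℝ) + (t:ℝ)))) := by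
  have hval : Continuous fun p : ↥(Ioi (0:ℝ)) × ↥(spectrum ℝ a) => (p.1 : ℝ) :=
    continuous_subtype_val.comp continuous_fst
  have hx : Continuous fun p : ↥(Ioi (0:ℝ)) × ↥(spectrum ℝ a) => (p.2 : ℝ) :=
    continuous_subtype_val.comp continuous_snd
  have hr : Continuous fun p : ↥(Ioi (0:ℝ)) × ↥(spectrum ℝ a) => (p.1 : ℝ) ^ (α - 1) :=
    hval.rpow_const (fun p => Or.inl (ne_of_gt p.1.2))
  exact hr.mul (hx.div (hx.add hval) (fun p => by
    have h2 := spectrum_nonneg_of_nonneg ha p.2.2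
    have h1 : (0:ℝ) < p.1 := p.1.2
    positivity))

lemma hbound_prop [Nontrivial A] (a : A) (ha : 0 ≤ a) {α : ℝ} (t : ↥(Ioi (0:ℝ))) :
    ∀ x ∈ spectrum ℝ a, ‖(t:ℝ) ^ (α - 1) * (x / (x + (t:ℝ)))‖ ≤
      ‖(t:ℝ) ^ (α - 1) * (‖a‖ / (‖a‖ + (t:ℝ)))‖ := by
  intro x hx
  have hx0 : 0 ≤ x := spectrum_nonneg_of_nonneg ha hx
  have hxM : x ≤ ‖a‖ := by
    have := spectrum.norm_le_norm_of_mem hx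
    rwa [Real.norm_eq_abs, abs_of_nonneg hx0] at this
  have ht0 : (0:ℝ) < t := t.2
  have hM : (0:ℝ) ≤ ‖a‖ := norm_nonneg a
  rw [Real.norm_eq_abs, Real.norm_eq_abs, abs_of_nonneg (by positivity),
    abs_of_nonneg (by positivity)]
  have hdiv : x / (x + (t:ℝ)) ≤ ‖a‖ / (‖a‖ + (t:ℝ)) := by
    rw [div_le_div_iff₀ (by positivity) (by positivity)]
    nlinarith
  have hrp := Real.rpow_nonneg ht0.le (α - 1)
  exact mul_le_mul_of_nonneg_left hdiv hrp

lemma cfc_kern_continuousOn (a : A) (ha : 0 ≤ a) {α : ℝ} (t : ↥(Ioi (0:ℝ))) :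
    ContinuousOn (fun x : ℝ => (t:ℝ) ^ (α - 1) * (x / (x + (t:ℝ)))) (spectrum ℝ a) := by
  refine continuousOn_const.mul (ContinuousOn.div (by fun_prop) (by fun_prop) ?_)
  intro x hx
  have := spectrum_nonneg_of_nonneg ha hx
  have ht0 : (0:ℝ) < t := t.2
  positivity

set_option maxHeartbeats 1000000 in
set_option synthInstance.maxHeartbeats 1000000 in
lemma opint_integrable [Nontrivial A] (a : A) (ha : 0 ≤ a) {α : ℝ} (h0 : 0 < α) (h1 : α < 1) :
    Integrable (fun t : ↥(Ioi (0:ℝ)) =>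
      cfc (fun x : ℝ => (t:ℝ) ^ (α - 1) * (x / (x + (t:ℝ)))) a) volume := by
  have hsa : IsSelfAdjoint a := IsSelfAdjoint.of_nonneg ha
  let fc : ↥(Ioi (0:ℝ)) → C(spectrum ℝ a, ℝ) :=
    fun t => ⟨(spectrum ℝ a).restrict (fun x : ℝ => (t:ℝ) ^ (α - 1) * (x / (x + (t:ℝ)))),
      (cfc_kern_continuousOn a ha (α := α) t).restrict⟩
  have hfc : Continuous fc :=
    (ContinuousMap.curry ⟨_, kern_uncurry_cont a ha (α := α)⟩).continuous
  have hfc_int : Integrable fc volume := by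
    refine ⟨hfc.aestronglyMeasurable, ?_⟩
    have hbd : HasFiniteIntegral
        (fun t : ↥(Ioi (0:ℝ)) => (t:ℝ) ^ (α - 1) * (‖a‖ / (‖a‖ + (t:ℝ)))) volume :=
      ((integrable_subtype_iff measurableSet_Ioi _).mpr
        (integrableOn_bound h0 h1 (norm_nonneg a))).2
    refine hbd.mono <| .of_forall fun t => ?_
    rw [ContinuousMap.norm_le _ (norm_nonneg _)]
    exact fun z => hbound_prop a ha t z.1 z.2
  have heq : (fun t : ↥(Ioi (0:ℝ)) =>
      cfc (fun x : ℝ => (t:ℝ) ^ (α - 1) * (x / (x + (t:ℝ)))) a) =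
      fun t => cfcL (a := a) hsa (fc t) := by
    funext t
    rw [cfc_apply _ a hsa (cfc_kern_continuousOn a ha t)]
    rfl
  rw [heq]
  exact (cfcL (a := a) hsa).integrable_comp hfc_int

set_option maxHeartbeats 1000000 in
set_option synthInstance.maxHeartbeats 1000000 in
lemma opint_repr [Nontrivial A] (a : A) (ha : 0 ≤ a) {α : ℝ} (h0 : 0 < α) (h1 : α < 1) :
    (∫ t : ↥(Ioi (0:ℝ)), cfc (fun x : ℝ => (t:ℝ) ^ (α - 1) * (x / (x + (t:ℝ)))) a)
      = (∫ t in Ioi (0:ℝ), t ^ (α - 1) / (1 + t)) • cfc (fun x : ℝ => x ^ α) a := by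
  have hsa : IsSelfAdjoint a := IsSelfAdjoint.of_nonneg ha
  have happ := cfc_integral (μ := (volume : Measure ↥(Ioi (0:ℝ))))
      (fun (t : ↥(Ioi (0:ℝ))) (x : ℝ) => (t:ℝ) ^ (α - 1) * (x / (x + (t:ℝ))))
      (fun t : ↥(Ioi (0:ℝ)) => (t:ℝ) ^ (α - 1) * (‖a‖ / (‖a‖ + (t:ℝ)))) a
      (by
        show ContinuousOn (fun p : ↥(Ioi (0:ℝ)) × ℝ => (p.1:ℝ) ^ (α - 1) * (p.2 / (p.2 + (p.1:ℝ)))) _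
        refine ContinuousOn.mul ?_ (ContinuousOn.div (by fun_prop) (by fun_prop) ?_)
        · exact (Continuous.rpow_const (continuous_subtype_val.comp continuous_fst)
            (fun p => Or.inl (ne_of_gt p.1.2))).continuousOn
        · rintro p ⟨-, hp⟩
          have := spectrum_nonneg_of_nonneg ha hp
          have : (0:ℝ) < p.1 := p.1.2
          positivity)
      (.of_forall fun t => fun x hx => (hbound_prop a ha (α := α) t x hx).trans
        (le_of_eq (Real.norm_of_nonneg (by have ht0 : (0:ℝ) < t := t.2; positivity))))
      (((integrable_subtype_iff measurableSet_Ioi _).mpr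
        (integrableOn_bound h0 h1 (norm_nonneg a))).2)
      hsa
  rw [← happ]
  have hcongr : ∀ r ∈ spectrum ℝ a,
      (∫ t : ↥(Ioi (0:ℝ)), (t:ℝ) ^ (α - 1) * (r / (r + (t:ℝ)))) =
        (∫ t in Ioi (0:ℝ), t ^ (α - 1) / (1 + t)) * r ^ α := by
    intro r hr
    rw [integral_subtype measurableSet_Ioi (fun t : ℝ => t ^ (α - 1) * (r / (r + t)))]
    exact scalar_repr h0 h1 (spectrum_nonneg_of_nonneg ha hr)
  rw [cfc_congr hcongr]
  exact cfc_const_mul _ (fun r : ℝ => r ^ α) a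
    (fun r _ => (Real.continuousAt_rpow_const r α (Or.inr h0.le)).continuousWithinAt)

end LoewnerHeinzAux

set_option maxHeartbeats 1000000 in
set_option synthInstance.maxHeartbeats 1000000 in
open LoewnerHeinzAux MeasureTheory Set in
attribute [local instance] Measure.Subtype.measureSpace in
/-- **Löwner–Heinz inequality.** If `A ≤ B` are positive bounded operators on a complex
Hilbert space, then `A^α ≤ B^α` for every `α ∈ [0,1]`, powers being given by the
continuous functional calculus.  `S ≤ T` is expressed as `(T - S).IsPositive`. -/
theorem loewner_heinz
    {H : Type*} [NormedAddCommGroup H] [InnerProductSpace ℂ H] [CompleteSpace H]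
    (A B : H →L[ℂ] H) (hA : A.IsPositive) (hB : B.IsPositive)
    (hAB : (B - A).IsPositive)
    (α : ℝ) (hα0 : 0 ≤ α) (hα1 : α ≤ 1) :
    (cfc (fun x : ℝ => x ^ α) B - cfc (fun x : ℝ => x ^ α) A).IsPositive := by
  rcases subsingleton_or_nontrivial (H →L[ℂ] H) with hS | hN
  · rw [Subsingleton.elim (cfc (fun x : ℝ => x ^ α) B - cfc (fun x : ℝ => x ^ α) A) 0]
    exact ContinuousLinearMap.isPositive_zero
  rcases eq_or_lt_of_le hα0 with rfl | h0
  · have : cfc (fun x : ℝ => x ^ (0:ℝ)) B = cfc (fun x : ℝ => x ^ (0:ℝ)) A := by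
      rw [cfc_congr (fun x _ => Real.rpow_zero x), cfc_congr (fun x _ => Real.rpow_zero x),
        cfc_const_one ℝ B hB.isSelfAdjoint, cfc_const_one ℝ A hA.isSelfAdjoint]
    rw [this, sub_self]
    exact ContinuousLinearMap.isPositive_zero
  rcases eq_or_lt_of_le hα1 with rfl | h1
  · have hid : ∀ (T : H →L[ℂ] H), T.IsPositive → cfc (fun x : ℝ => x ^ (1:ℝ)) T = T := by
      intro T hT
      rw [cfc_congr (fun x _ => Real.rpow_one x), cfc_id' ℝ T hT.isSelfAdjoint]
    rw [hid B hB, hid A hA]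
    exact hAB
  -- main case `0 < α < 1`
  have hA0 : (0 : H →L[ℂ] H) ≤ A := (ContinuousLinearMap.nonneg_iff_isPositive A).mpr hA
  have hB0 : (0 : H →L[ℂ] H) ≤ B := (ContinuousLinearMap.nonneg_iff_isPositive B).mpr hB
  have hab : A ≤ B := (ContinuousLinearMap.le_def A B).mpr hAB
  set I : ℝ := ∫ t in Ioi (0:ℝ), t ^ (α - 1) / (1 + t) with hIdef
  have hI : 0 < I := I_pos h0 h1
  set F : (H →L[ℂ] H) → ↥(Ioi (0:ℝ)) → (H →L[ℂ] H) :=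
    fun a t => cfc (fun x : ℝ => (t:ℝ) ^ (α - 1) * (x / (x + (t:ℝ)))) a with hFdef
  have hFA_int : Integrable (F A) volume := opint_integrable A hA0 h0 h1
  have hFB_int : Integrable (F B) volume := opint_integrable B hB0 h0 h1
  have hkey : cfc (fun x : ℝ => x ^ α) B - cfc (fun x : ℝ => x ^ α) A
      = I⁻¹ • ∫ t : ↥(Ioi (0:ℝ)), (F B t - F A t) := by
    rw [integral_sub hFB_int hFA_int, hFdef]
    rw [opint_repr B hB0 h0 h1, opint_repr A hA0 h0 h1, ← smul_sub, smul_smul,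
      inv_mul_cancel₀ hI.ne', one_smul]
  have hpos : ∀ t : ↥(Ioi (0:ℝ)), (F B t - F A t).IsPositive := by
    intro t
    have := cfc_kern_mono hA0 hB0 hab (t := (t:ℝ)) (c := (t:ℝ) ^ (α - 1)) t.2
      (Real.rpow_nonneg (le_of_lt t.2) _)
    exact (ContinuousLinearMap.le_def _ _).mp this
  constructor
  · have hsB : IsSelfAdjoint (cfc (fun x : ℝ => x ^ α) B) := cfc_predicate _ B
    have hsA : IsSelfAdjoint (cfc (fun x : ℝ => x ^ α) A) := cfc_predicate _ A
    exact ContinuousLinearMap.isSelfAdjoint_iff_isSymmetric.mp (hsB.sub hsA)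
  · intro ξ
    rw [hkey]
    set L : (H →L[ℂ] H) →L[ℝ] ℝ :=
      Complex.reCLM.comp
        (((innerSL ℂ ξ).comp (ContinuousLinearMap.apply ℂ H ξ)).restrictScalars ℝ) with hLdef
    have hL : ∀ T : H →L[ℂ] H, L T = T.reApplyInnerSelf ξ := by
      intro T
      simp only [hLdef, ContinuousLinearMap.coe_comp', Function.comp_apply,
        ContinuousLinearMap.coe_restrictScalars', ContinuousLinearMap.apply_apply,
        innerSL_apply_apply, Complex.reCLM_apply, ContinuousLinearMap.reApplyInnerSelf]
      exact inner_re_symm (𝕜 := ℂ) ξ (T ξ) ▸ rfl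
    have hint : Integrable (fun t : ↥(Ioi (0:ℝ)) => F B t - F A t) volume :=
      hFB_int.sub hFA_int
    have hcomm := ContinuousLinearMap.integral_comp_comm L hint
    have heval : (I⁻¹ • ∫ t : ↥(Ioi (0:ℝ)), (F B t - F A t)).reApplyInnerSelf ξ
        = I⁻¹ * L (∫ t : ↥(Ioi (0:ℝ)), (F B t - F A t)) := by
      rw [← hL, _root_.map_smul, smul_eq_mul]
    rw [heval, ← hcomm]
    have : 0 ≤ ∫ t : ↥(Ioi (0:ℝ)), L (F B t - F A t) := by
      refine integral_nonneg (fun t => ?_)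
      rw [hL]
      exact (hpos t).2 ξ
    positivity
end

section
/- Let H and K be complex Hilbert spaces, A a positive bounded operator on H, B a positive bounded invertible operator on K, and V : K → H a bounded linear operator with ‖V‖ ≤ 1 such that V* A V ≤ B. Then for every α ∈ [0,1]: (i) V* A^α V ≤ B^α, and (ii) the operator A^{α/2} V B^{−α/2} : K → H satisfies ‖A^{α/2} V B^{−α/2}‖ ≤ 1. -/
namespace ContractionPowerBoundAux

open ContinuousLinearMap

lemma contOn_rpow {s : Set ℝ} {t : ℝ} (h : ∀ x ∈ s, x ≠ 0 ∨ 0 ≤ t) :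
    ContinuousOn (fun x : ℝ => x ^ t) s := fun x hx =>
  (Real.continuousAt_rpow_const x t (h x hx)).continuousWithinAt

variable {H : Type*} [NormedAddCommGroup H] [InnerProductSpace ℂ H] [CompleteSpace H]

/-- real power of an operator via cfc -/
noncomputable def Pw (A : H →L[ℂ] H) (t : ℝ) : H →L[ℂ] H := cfc (fun x : ℝ => x ^ t) A

lemma Pw_nonneg {A : H →L[ℂ] H} (hA : A.IsPositive) (t : ℝ) : 0 ≤ Pw A t :=
  cfc_nonneg fun x hx => Real.rpow_nonneg
    (spectrum_nonneg_of_nonneg ((nonneg_iff_isPositive A).mpr hA) hx) t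

lemma Pw_isPositive {A : H →L[ℂ] H} (hA : A.IsPositive) (t : ℝ) : (Pw A t).IsPositive :=
  (nonneg_iff_isPositive _).mp (Pw_nonneg hA t)

lemma Pw_sa {A : H →L[ℂ] H} (hA : A.IsPositive) (t : ℝ) : IsSelfAdjoint (Pw A t) :=
  IsSelfAdjoint.of_nonneg (Pw_nonneg hA t)

lemma Pw_adjoint {A : H →L[ℂ] H} (hA : A.IsPositive) (t : ℝ) :
    ContinuousLinearMap.adjoint (Pw A t) = Pw A t := by
  rw [← star_eq_adjoint, (Pw_sa hA t).star_eq]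

lemma Pw_zero {A : H →L[ℂ] H} (hA : A.IsPositive) : Pw A 0 = 1 := by
  unfold Pw
  simp only [Real.rpow_zero]
  exact cfc_const_one ℝ A hA.isSelfAdjoint

lemma Pw_one {A : H →L[ℂ] H} (hA : A.IsPositive) : Pw A 1 = A := by
  unfold Pw
  simp only [Real.rpow_one]
  exact cfc_id' ℝ A hA.isSelfAdjoint

lemma spec_pos {B : H →L[ℂ] H} (hB : B.IsPositive) (hBinv : IsUnit B) :
    ∀ x ∈ spectrum ℝ B, 0 < x := by
  intro x hx
  have h1 : 0 ≤ x := spectrum_nonneg_of_nonneg ((nonneg_iff_isPositive B).mpr hB) hx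
  refine h1.lt_of_ne' fun h => ?_
  exact (spectrum.zero_mem_iff ℝ).mp (h ▸ hx) hBinv

lemma Pw_comp_of_pos {B : H →L[ℂ] H} (hspec : ∀ x ∈ spectrum ℝ B, 0 < x) (s t : ℝ) :
    Pw B s ∘L Pw B t = Pw B (s + t) := by
  have hc : ∀ u : ℝ, ContinuousOn (fun x : ℝ => x ^ u) (spectrum ℝ B) :=
    fun u => contOn_rpow (fun x hx => Or.inl (hspec x hx).ne')
  have h1 : cfc (fun x : ℝ => x ^ s) B * cfc (fun x : ℝ => x ^ t) B
      = cfc (fun x : ℝ => x ^ s * x ^ t) B := (cfc_mul _ _ B (hc s) (hc t)).symm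
  have h2 : cfc (fun x : ℝ => x ^ s * x ^ t) B = cfc (fun x : ℝ => x ^ (s + t)) B :=
    cfc_congr (fun x hx => (Real.rpow_add (hspec x hx) s t).symm)
  exact h1.trans h2

lemma Pw_comp_of_nonneg {A : H →L[ℂ] H} (hA : A.IsPositive) {s t : ℝ}
    (hs : 0 ≤ s) (ht : 0 ≤ t) : Pw A s ∘L Pw A t = Pw A (s + t) := by
  have hnn : ∀ x ∈ spectrum ℝ A, 0 ≤ x :=
    fun x hx => spectrum_nonneg_of_nonneg ((nonneg_iff_isPositive A).mpr hA) hx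
  have hc : ∀ u : ℝ, 0 ≤ u → ContinuousOn (fun x : ℝ => x ^ u) (spectrum ℝ A) :=
    fun u hu => contOn_rpow (fun x _ => Or.inr hu)
  have h1 : cfc (fun x : ℝ => x ^ s) A * cfc (fun x : ℝ => x ^ t) A
      = cfc (fun x : ℝ => x ^ s * x ^ t) A := (cfc_mul _ _ A (hc s hs) (hc t ht)).symm
  have h2 : cfc (fun x : ℝ => x ^ s * x ^ t) A = cfc (fun x : ℝ => x ^ (s + t)) A :=
    cfc_congr (fun x hx => (Real.rpow_add_of_nonneg (hnn x hx) hs ht).symm)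
  exact h1.trans h2

lemma Pw_norm_le {A : H →L[ℂ] H} (hA : A.IsPositive) {t c : ℝ} (hc : 0 ≤ c)
    (h : ∀ x ∈ spectrum ℝ A, x ^ t ≤ c) : ‖Pw A t‖ ≤ c := by
  refine norm_cfc_le hc fun x hx => ?_
  have h0 : 0 ≤ x ^ t := Real.rpow_nonneg
    (spectrum_nonneg_of_nonneg ((nonneg_iff_isPositive A).mpr hA) hx) t
  rw [Real.norm_eq_abs, abs_of_nonneg h0]
  exact h x hx

section TwoSpaces

variable {K : Type*} [NormedAddCommGroup K] [InnerProductSpace ℂ K] [CompleteSpace K]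

/-- `‖T‖ ≤ 1` iff `T*T ≤ 1`, for operators between different Hilbert spaces. -/
lemma norm_le_one_iff_adjoint_comp_self_le_one (T : K →L[ℂ] H) :
    ‖T‖ ≤ 1 ↔ ContinuousLinearMap.adjoint T ∘L T ≤ (1 : K →L[ℂ] K) := by
  have key : ∀ x : K, RCLike.re (inner ℂ ((1 - ContinuousLinearMap.adjoint T ∘L T) x) x : ℂ)
      = ‖x‖ ^ 2 - ‖T x‖ ^ 2 := by
    intro x
    rw [sub_apply, inner_sub_left, map_sub, ContinuousLinearMap.one_apply, comp_apply, adjoint_inner_left,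
      inner_self_eq_norm_sq, inner_self_eq_norm_sq]
  constructor
  · intro h
    rw [le_def]
    refine ⟨?_, fun x => ?_⟩
    · rw [← isSelfAdjoint_iff_isSymmetric, IsSelfAdjoint, star_sub, star_one, star_eq_adjoint, adjoint_comp, adjoint_adjoint]
    · rw [reApplyInnerSelf, key]
      have : ‖T x‖ ≤ ‖x‖ := by
        calc ‖T x‖ ≤ ‖T‖ * ‖x‖ := T.le_opNorm x
        _ ≤ 1 * ‖x‖ := by gcongr
        _ = ‖x‖ := one_mul _
      nlinarith [norm_nonneg (T x), norm_nonneg x]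
  · intro h
    rw [le_def] at h
    refine opNorm_le_bound T zero_le_one fun x => ?_
    have h2 := h.2 x
    rw [reApplyInnerSelf, key] at h2
    rw [one_mul]
    nlinarith [norm_nonneg (T x), norm_nonneg x]

variable (V : K →L[ℂ] H) (A : H →L[ℂ] H) (B : K →L[ℂ] K)

/-- The interpolating operator family. -/
noncomputable def Tt (t : ℝ) : K →L[ℂ] H := Pw A (t / 2) ∘L V ∘L Pw B (-(t / 2))

variable {V A B}

lemma Pw_comp_of_pos' {B : K →L[ℂ] K} (hspec : ∀ x ∈ spectrum ℝ B, 0 < x) (s t : ℝ)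
    {W : Type*} [NormedAddCommGroup W] [InnerProductSpace ℂ W]
    (X : W →L[ℂ] K) : Pw B s ∘L (Pw B t ∘L X) = Pw B (s + t) ∘L X := by
  rw [← comp_assoc, Pw_comp_of_pos hspec]

lemma Pw_comp_of_nonneg' {A : H →L[ℂ] H} (hA : A.IsPositive) {s t : ℝ}
    (hs : 0 ≤ s) (ht : 0 ≤ t)
    {W : Type*} [NormedAddCommGroup W] [InnerProductSpace ℂ W]
    (X : W →L[ℂ] H) : Pw A s ∘L (Pw A t ∘L X) = Pw A (s + t) ∘L X := by
  rw [← comp_assoc, Pw_comp_of_nonneg hA hs ht]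

lemma adjoint_Tt (hA : A.IsPositive) (hB : B.IsPositive) (t : ℝ) :
    ContinuousLinearMap.adjoint (Tt V A B t)
      = Pw B (-(t / 2)) ∘L ContinuousLinearMap.adjoint V ∘L Pw A (t / 2) := by
  rw [Tt, adjoint_comp, adjoint_comp, Pw_adjoint hA, Pw_adjoint hB, comp_assoc]

lemma adjoint_Tt_comp_Tt (hA : A.IsPositive) (hB : B.IsPositive)
    (hBspec : ∀ x ∈ spectrum ℝ B, 0 < x) {t : ℝ} (ht : 0 ≤ t) :
    ContinuousLinearMap.adjoint (Tt V A B t) ∘L Tt V A B t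
      = Pw B (-(t / 2)) ∘L ((ContinuousLinearMap.adjoint V ∘L Pw A t ∘L V) ∘L Pw B (-(t / 2))) := by
  rw [adjoint_Tt hA hB, Tt]
  simp only [comp_assoc]
  rw [Pw_comp_of_nonneg' hA (by linarith) (by linarith)]
  norm_num

lemma le_iff_norm_Tt (hA : A.IsPositive) (hB : B.IsPositive)
    (hBspec : ∀ x ∈ spectrum ℝ B, 0 < x) {t : ℝ} (ht : 0 ≤ t) :
    ContinuousLinearMap.adjoint V ∘L Pw A t ∘L V ≤ Pw B t ↔ ‖Tt V A B t‖ ≤ 1 := by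
  rw [norm_le_one_iff_adjoint_comp_self_le_one, adjoint_Tt_comp_Tt hA hB hBspec ht]
  set X := ContinuousLinearMap.adjoint V ∘L Pw A t ∘L V with hX
  set Q := Pw B (-(t / 2)) with hQ
  have hQsa : star Q = Q := (Pw_sa hB _).star_eq
  have hQQ : ∀ (u v : ℝ) (Y : K →L[ℂ] K), Pw B u ∘L (Pw B v ∘L Y) = Pw B (u + v) ∘L Y :=
    fun u v Y => Pw_comp_of_pos' hBspec u v Y
  have h0 : ∀ Y : K →L[ℂ] K, Q ∘L (Y ∘L Q) = Q * Y * Q := by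
    intro Y; rw [mul_def, mul_def, comp_assoc]
  have h3 : Q * Pw B t * Q = 1 := by
    rw [← h0, hQQ, show -(t/2) + t = t/2 by ring, hQ, Pw_comp_of_pos hBspec,
      show t/2 + -(t/2) = (0:ℝ) by ring, Pw_zero hB]
  constructor
  · intro h
    have h2 := star_left_conjugate_le_conjugate h Q
    rw [hQsa] at h2
    rw [h0]
    exact h2.trans_eq h3
  · intro h
    have h2 := star_left_conjugate_le_conjugate h (Pw B (t / 2))
    have hPsa : star (Pw B (t / 2)) = Pw B (t / 2) := (Pw_sa hB _).star_eq
    rw [hPsa] at h2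
    have h4 : ∀ Y : K →L[ℂ] K, Pw B (t/2) * Y * Pw B (t/2) = Pw B (t/2) ∘L (Y ∘L Pw B (t/2)) := by
      intro Y; rw [mul_def, mul_def, comp_assoc]
    have e1 : Pw B (t / 2) * (Q ∘L (X ∘L Q)) * Pw B (t / 2) = X := by
      rw [h4]
      simp only [comp_assoc]
      rw [hQQ, show t/2 + -(t/2) = (0:ℝ) by ring, Pw_zero hB, one_def, id_comp, hQ,
        Pw_comp_of_pos hBspec, show -(t/2) + t/2 = (0:ℝ) by ring, Pw_zero hB, one_def, comp_id]
    have e2 : Pw B (t / 2) * 1 * Pw B (t / 2) = Pw B t := by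
      rw [mul_one, mul_def, Pw_comp_of_pos hBspec, show t/2 + t/2 = t by ring]
    rw [← e1, ← e2]
    exact h2

lemma norm_adjoint_eq (X : K →L[ℂ] H) : ‖ContinuousLinearMap.adjoint X‖ = ‖X‖ :=
  LinearIsometryEquiv.norm_map (ContinuousLinearMap.adjoint : (K →L[ℂ] H) ≃ₗᵢ⋆[ℂ] _) X

set_option maxHeartbeats 1000000 in
lemma midpoint_step (hV : ‖V‖ ≤ 1) (hA : A.IsPositive) (hB : B.IsPositive)
    (hBspec : ∀ x ∈ spectrum ℝ B, 0 < x) {s t : ℝ} (hs : 0 ≤ s) (ht : 0 ≤ t)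
    (hTs : ‖Tt V A B s‖ ≤ 1) (hTt : ‖Tt V A B t‖ ≤ 1) :
    ‖Tt V A B ((s + t) / 2)‖ ≤ 1 := by
  have hγ : 0 ≤ (s + t) / 2 := by linarith
  set Pos : K →L[ℂ] K :=
    ContinuousLinearMap.adjoint (Tt V A B ((s + t) / 2)) ∘L Tt V A B ((s + t) / 2) with hPos
  set L : H →L[ℂ] K :=
    Pw B (-((s + t) / 2 / 2)) ∘L (ContinuousLinearMap.adjoint V ∘L Pw A (s / 2)) with hL
  set W : H →L[ℂ] H := Tt V A B t ∘L ContinuousLinearMap.adjoint (Tt V A B s) with hW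
  set R : K →L[ℂ] K := Pw B ((t - s) / 4) with hR
  -- base identity
  have base : Pos = L ∘L (Tt V A B t ∘L R) := by
    rw [hPos, adjoint_Tt_comp_Tt hA hB hBspec hγ, hL, hR, Tt]
    simp only [comp_assoc]
    rw [Pw_comp_of_pos hBspec, Pw_comp_of_nonneg' hA (by linarith) (by linarith)]
    rw [show -(t/2) + (t-s)/4 = -((s+t)/2/2) by ring, show s/2 + t/2 = (s+t)/2 by ring]
  have hRL : R ∘L L = ContinuousLinearMap.adjoint (Tt V A B s) := by
    rw [hR, hL, adjoint_Tt hA hB]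
    rw [Pw_comp_of_pos' hBspec, show (t-s)/4 + -((s+t)/2/2) = -(s/2) by ring]
  -- the key power identity
  have key : ∀ n : ℕ, Pos ^ (n + 1) = L ∘L ((W ^ n) ∘L (Tt V A B t ∘L R)) := by
    intro n
    induction n with
    | zero => simpa [pow_zero, one_def, id_comp] using base
    | succ n ih =>
      have : Pos ^ (n + 2) = Pos * Pos ^ (n + 1) := by rw [← pow_succ']
      rw [this, ih, base]
      calc (L ∘L (Tt V A B t ∘L R)) * (L ∘L ((W ^ n) ∘L (Tt V A B t ∘L R)))
          = L ∘L (Tt V A B t ∘L ((R ∘L L) ∘L ((W ^ n) ∘L (Tt V A B t ∘L R)))) := by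
            rw [mul_def]; simp only [comp_assoc]
        _ = L ∘L ((W ∘L (W ^ n)) ∘L (Tt V A B t ∘L R)) := by
            rw [hRL, hW]; simp only [comp_assoc]
        _ = L ∘L ((W ^ (n + 1)) ∘L (Tt V A B t ∘L R)) := by
            rw [show W ∘L (W ^ n) = W * W ^ n from rfl, ← pow_succ']
  have hPos_sa : IsSelfAdjoint Pos := by
    rw [IsSelfAdjoint, star_eq_adjoint, hPos, adjoint_comp, adjoint_adjoint]
  have hW1 : ‖W‖ ≤ 1 := by
    calc ‖W‖ ≤ ‖Tt V A B t‖ * ‖ContinuousLinearMap.adjoint (Tt V A B s)‖ :=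
          opNorm_comp_le _ _
      _ ≤ 1 * 1 := by rw [norm_adjoint_eq]; exact mul_le_mul hTt hTs (norm_nonneg _) zero_le_one
      _ = 1 := one_mul 1
  have hWn : ∀ n : ℕ, ‖W ^ n‖ ≤ 1 := by
    intro n
    cases n with
    | zero => rw [pow_zero, one_def]; exact norm_id_le
    | succ n =>
      calc ‖W ^ (n + 1)‖ ≤ ‖W‖ ^ (n + 1) := norm_pow_le' W n.succ_pos
        _ ≤ 1 ^ (n + 1) := pow_le_pow_left₀ (norm_nonneg W) hW1 _
        _ = 1 := one_pow _
  set C : ℝ := ‖L‖ * (‖Tt V A B t‖ * ‖R‖) with hC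
  have hCn : ∀ n : ℕ, ‖Pos ^ (n + 1)‖ ≤ C := by
    intro n
    rw [key n]
    calc ‖L ∘L ((W ^ n) ∘L (Tt V A B t ∘L R))‖ ≤ ‖L‖ * ‖(W ^ n) ∘L (Tt V A B t ∘L R)‖ :=
        opNorm_comp_le _ _
      _ ≤ ‖L‖ * (‖W ^ n‖ * ‖Tt V A B t ∘L R‖) :=
          mul_le_mul_of_nonneg_left (opNorm_comp_le _ _) (norm_nonneg L)
      _ ≤ ‖L‖ * (1 * (‖Tt V A B t‖ * ‖R‖)) :=
          mul_le_mul_of_nonneg_left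
            (mul_le_mul (hWn n) (opNorm_comp_le _ _) (norm_nonneg _) zero_le_one)
            (norm_nonneg L)
      _ = C := by rw [one_mul]
  have hPosnorm : ‖Pos‖ ≤ 1 := by
    by_contra hcon
    push_neg at hcon
    obtain ⟨n, hn⟩ := pow_unbounded_of_one_lt C hcon
    have h2n : ‖Pos‖ ^ n ≤ ‖Pos‖ ^ 2 ^ n :=
      pow_le_pow_right₀ hcon.le (Nat.le_of_lt Nat.lt_two_pow_self)
    have hpow : ‖Pos ^ 2 ^ n‖ = ‖Pos‖ ^ 2 ^ n := by
      have h5 := congrArg (fun x : NNReal => (x : ℝ)) (hPos_sa.nnnorm_pow_two_pow n)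
      simpa [coe_nnnorm, NNReal.coe_pow] using h5
    have h3 : ‖Pos ^ 2 ^ n‖ ≤ C := by
      have h4 : 2 ^ n = (2 ^ n - 1) + 1 := (Nat.succ_pred_eq_of_pos (Nat.two_pow_pos n)).symm
      rw [h4]
      exact hCn _
    rw [hpow] at h3
    exact lt_irrefl C (hn.trans_le (h2n.trans h3))
  have hfin : ‖Tt V A B ((s + t) / 2)‖ * ‖Tt V A B ((s + t) / 2)‖ ≤ 1 := by
    rw [← norm_adjoint_comp_self, ← hPos]; exact hPosnorm
  nlinarith [norm_nonneg (Tt V A B ((s + t) / 2))]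

lemma Tt_zero (hA : A.IsPositive) (hB : B.IsPositive) : Tt V A B 0 = V := by
  rw [Tt, show -((0:ℝ)/2) = (0:ℝ) by norm_num, show (0:ℝ)/2 = (0:ℝ) by norm_num,
    Pw_zero hA, Pw_zero hB]
  simp only [one_def, id_comp, comp_id]

lemma Tt_one_norm (hA : A.IsPositive) (hB : B.IsPositive)
    (hBspec : ∀ x ∈ spectrum ℝ B, 0 < x)
    (hVAB : ContinuousLinearMap.adjoint V ∘L A ∘L V ≤ B) : ‖Tt V A B 1‖ ≤ 1 := by
  rw [← le_iff_norm_Tt hA hB hBspec zero_le_one, Pw_one hA, Pw_one hB]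
  exact hVAB

/-- Norm-continuity of `u ↦ cfc (· ^ e u) A` on suitable sets. -/
lemma tendsto_Pw {A : H →L[ℂ] H} (hA : A.IsPositive) {U : Set ℝ} (hU : IsCompact U)
    (e : ℝ → ℝ) (he : Continuous e)
    (hok : ∀ u ∈ U, ∀ x ∈ spectrum ℝ A, x ≠ 0 ∨ 0 < e u) {c : ℝ} (hcU : c ∈ U) :
    Filter.Tendsto (fun u => Pw A (e u)) (nhdsWithin c U) (nhds (Pw A (e c))) := by
  set F : ℝ → ℝ → ℝ := fun u x => x ^ (e u) with hF
  have cont : ContinuousOn (Function.uncurry F) (U ×ˢ spectrum ℝ A) := by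
    rintro ⟨u, x⟩ ⟨hu, hx⟩
    apply ContinuousAt.continuousWithinAt
    have h1 : ContinuousAt (fun p : ℝ × ℝ => p.1 ^ p.2) (x, e u) :=
      Real.continuousAt_rpow (x, e u) (hok u hu x hx)
    have h2 : ContinuousAt (fun q : ℝ × ℝ => (q.2, e q.1)) (u, x) :=
      (continuous_snd.prodMk (he.comp continuous_fst)).continuousAt
    exact ContinuousAt.comp (g := fun p : ℝ × ℝ => p.1 ^ p.2)
      (f := fun q : ℝ × ℝ => (q.2, e q.1)) (x := (u, x)) h1 h2
  have huc : UniformContinuousOn (Function.uncurry F) (U ×ˢ spectrum ℝ A) :=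
    (hU.prod (spectrum.isCompact A)).uniformContinuousOn_of_continuous cont
  have htuo : TendstoUniformlyOn F (F c) (nhdsWithin c U) (spectrum ℝ A) :=
    huc.tendstoUniformlyOn hcU
  rw [Metric.tendstoUniformlyOn_iff] at htuo
  rw [Metric.tendsto_nhds]
  intro ε hε
  filter_upwards [htuo (ε/2) (by linarith), self_mem_nhdsWithin] with u hu huU
  have hcont : ∀ v ∈ U, ContinuousOn (fun x : ℝ => x ^ (e v)) (spectrum ℝ A) :=
    fun v hv => contOn_rpow (fun x hx => (hok v hv x hx).imp_right le_of_lt)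
  have hsub : Pw A (e u) - Pw A (e c) = cfc (fun x : ℝ => x ^ (e u) - x ^ (e c)) A :=
    (cfc_sub _ _ A (hcont u huU) (hcont c hcU)).symm
  rw [dist_eq_norm, hsub]
  have hb : ‖cfc (fun x : ℝ => x ^ (e u) - x ^ (e c)) A‖ ≤ ε/2 := by
    apply norm_cfc_le (by linarith)
    intro x hx
    have := hu x hx
    rw [dist_eq_norm] at this
    rw [Real.norm_eq_abs] at this ⊢
    rw [abs_sub_comm]
    exact (le_of_lt this)
  linarith

lemma tendsto_Tt (hA : A.IsPositive) (hB : B.IsPositive)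
    (hBspec : ∀ x ∈ spectrum ℝ B, 0 < x) {α : ℝ} (hα0 : 0 < α) (hα1 : α ≤ 1) :
    Filter.Tendsto (fun u => Tt V A B u) (nhdsWithin α (Set.Icc (α/2) 1))
      (nhds (Tt V A B α)) := by
  have hcU : α ∈ Set.Icc (α/2) 1 := ⟨by linarith, hα1⟩
  have h2 : Filter.Tendsto (fun u => Pw A (u/2)) (nhdsWithin α (Set.Icc (α/2) 1))
      (nhds (Pw A (α/2))) := by
    refine tendsto_Pw hA isCompact_Icc _ (by continuity) (fun u hu x hx => Or.inr ?_) hcU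
    have := hu.1; linarith
  have h1 : Filter.Tendsto (fun u => Pw B (-(u/2))) (nhdsWithin α (Set.Icc (α/2) 1))
      (nhds (Pw B (-(α/2)))) :=
    tendsto_Pw hB isCompact_Icc _ (by continuity)
      (fun u hu x hx => Or.inl (hBspec x hx).ne') hcU
  have h3 : Filter.Tendsto (fun u => V ∘L Pw B (-(u/2))) (nhdsWithin α (Set.Icc (α/2) 1))
      (nhds (V ∘L Pw B (-(α/2)))) := by
    have hc : Continuous (fun Q : K →L[ℂ] K => V ∘L Q) :=
      (ContinuousLinearMap.compL ℂ K K H V).continuous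
    exact (hc.tendsto _).comp h1
  have h4 := (h2.prodMk_nhds h3)
  have h5 : Continuous (fun p : (H →L[ℂ] H) × (K →L[ℂ] H) => p.1.comp p.2) :=
    (isBoundedBilinearMap_comp (𝕜 := ℂ)).continuous
  exact ((h5.tendsto _).comp h4 : _)

lemma dyadic_norm (hV : ‖V‖ ≤ 1) (hA : A.IsPositive) (hB : B.IsPositive)
    (hBspec : ∀ x ∈ spectrum ℝ B, 0 < x) (hT1 : ‖Tt V A B 1‖ ≤ 1) :
    ∀ n k : ℕ, k ≤ 2^n → ‖Tt V A B ((k : ℝ) / 2 ^ n)‖ ≤ 1 := by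
  intro n
  induction n with
  | zero =>
    intro k hk
    interval_cases k
    · rw [show ((0:ℕ):ℝ)/2^(0:ℕ) = 0 by norm_num, Tt_zero hA hB]; exact hV
    · rw [show ((1:ℕ):ℝ)/2^(0:ℕ) = 1 by norm_num]; exact hT1
  | succ n ih =>
    intro k hk
    have h2 : (2:ℕ)^(n+1) = 2^n * 2 := pow_succ 2 n
    rcases Nat.even_or_odd k with ⟨m, hm⟩ | ⟨m, hm⟩
    · subst hm
      rw [show ((m+m:ℕ):ℝ)/2^((n:ℕ)+1) = (m:ℝ)/2^n by push_cast; ring]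
      exact ih m (by omega)
    · subst hm
      have hmle : m ≤ 2^n := by omega
      have hmle1 : m + 1 ≤ 2^n := by omega
      have hmid := midpoint_step hV hA hB hBspec
        (s := (m:ℝ)/2^n) (t := ((m+1:ℕ):ℝ)/2^n) (by positivity) (by positivity)
        (ih m hmle) (ih (m+1) hmle1)
      rw [show ((2*m+1:ℕ):ℝ)/2^((n:ℕ)+1) = (((m:ℝ)/2^n) + (((m+1:ℕ):ℝ)/2^n))/2 by
        push_cast; ring]
      exact hmid

lemma Tt_norm_le_one (hV : ‖V‖ ≤ 1) (hA : A.IsPositive) (hB : B.IsPositive)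
    (hBspec : ∀ x ∈ spectrum ℝ B, 0 < x) (hT1 : ‖Tt V A B 1‖ ≤ 1)
    {α : ℝ} (hα0 : 0 ≤ α) (hα1 : α ≤ 1) : ‖Tt V A B α‖ ≤ 1 := by
  rcases eq_or_lt_of_le hα0 with h0 | h0
  · rw [← h0, Tt_zero hA hB]; exact hV
  set a : ℕ → ℝ := fun n => ((⌊α * 2^n⌋₊ : ℕ) : ℝ) / 2 ^ n with ha
  have hfloor_le : ∀ n : ℕ, (⌊α * 2^n⌋₊ : ℕ) ≤ 2^n := by
    intro n
    have h1 : α * 2^n ≤ ((2^n : ℕ) : ℝ) := by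
      push_cast
      nlinarith [pow_pos (show (0:ℝ) < 2 by norm_num) n]
    calc ⌊α * 2^n⌋₊ ≤ ⌊((2^n : ℕ) : ℝ)⌋₊ := Nat.floor_mono h1
      _ = 2^n := Nat.floor_natCast _
  have ha_le : ∀ n, a n ≤ α := by
    intro n
    rw [ha]
    have h2 : (0:ℝ) < 2^n := by positivity
    rw [div_le_iff₀ h2]
    exact Nat.floor_le (by positivity)
  have ha_lb : ∀ n, α - 1/2^n ≤ a n := by
    intro n
    have h2 : (0:ℝ) < 2^n := by positivity
    rw [ha, sub_le_iff_le_add, ← add_div, le_div_iff₀ h2]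
    have := (Nat.lt_floor_add_one (α * 2^n)).le
    calc α * 2^n ≤ (⌊α * 2^n⌋₊ : ℝ) + 1 := this
      _ = ((⌊α * 2^n⌋₊ : ℕ) : ℝ) + 1 := by norm_num
  have htend : Filter.Tendsto a Filter.atTop (nhds α) := by
    have hub : Filter.Tendsto (fun n : ℕ => α - 1/2^n) Filter.atTop (nhds α) := by
      have : Filter.Tendsto (fun n : ℕ => (1:ℝ)/2^n) Filter.atTop (nhds 0) := by
        simp_rw [one_div, ← inv_pow]
        exact tendsto_pow_atTop_nhds_zero_of_lt_one (by norm_num) (by norm_num)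
      simpa using Filter.Tendsto.sub (tendsto_const_nhds) this
    exact tendsto_of_tendsto_of_tendsto_of_le_of_le hub tendsto_const_nhds
      (fun n => ha_lb n) (fun n => ha_le n)
  have hmem : ∀ᶠ n in Filter.atTop, a n ∈ Set.Icc (α/2) 1 := by
    have hev : ∀ᶠ n in Filter.atTop, α/2 < a n :=
      htend.eventually (eventually_gt_nhds (by linarith))
    filter_upwards [hev] with n hn
    exact ⟨hn.le, (ha_le n).trans hα1⟩
  have hwithin : Filter.Tendsto a Filter.atTop (nhdsWithin α (Set.Icc (α/2) 1)) :=
    tendsto_nhdsWithin_iff.mpr ⟨htend, hmem⟩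
  have hT := (tendsto_Tt (V := V) hA hB hBspec h0 hα1).comp hwithin
  have hnorm : Filter.Tendsto (fun n => ‖Tt V A B (a n)‖) Filter.atTop
      (nhds ‖Tt V A B α‖) := (continuous_norm.tendsto _).comp hT
  refine le_of_tendsto hnorm (Filter.Eventually.of_forall fun n => ?_)
  exact dyadic_norm hV hA hB hBspec hT1 n _ (hfloor_le n)

end TwoSpaces

end ContractionPowerBoundAux

/-- Bounded-operator form of Lemma 3 of the paper: if `V : K → H` is a contraction, `A` is a
positive bounded operator on `H`, `B` a positive invertible bounded operator on `K` and
`V* A V ≤ B`, then for `α ∈ [0,1]` one has `V* A^α V ≤ B^α` and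
`‖A^{α/2} V B^{-α/2}‖ ≤ 1`, powers being given by the continuous functional calculus.
`S ≤ T` is expressed as `(T - S).IsPositive`. -/
theorem contraction_power_bound
    {H K : Type*} [NormedAddCommGroup H] [InnerProductSpace ℂ H] [CompleteSpace H]
    [NormedAddCommGroup K] [InnerProductSpace ℂ K] [CompleteSpace K]
    (V : K →L[ℂ] H) (hV : ‖V‖ ≤ 1)
    (A : H →L[ℂ] H) (hA : A.IsPositive)
    (B : K →L[ℂ] K) (hB : B.IsPositive) (hBinv : IsUnit B)
    (hVAB : (B - ContinuousLinearMap.adjoint V ∘L A ∘L V).IsPositive)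
    (α : ℝ) (hα0 : 0 ≤ α) (hα1 : α ≤ 1) :
    (cfc (fun x : ℝ => x ^ α) B
        - ContinuousLinearMap.adjoint V ∘L cfc (fun x : ℝ => x ^ α) A ∘L V).IsPositive ∧
      ‖cfc (fun x : ℝ => x ^ (α / 2)) A ∘L V ∘L cfc (fun x : ℝ => x ^ (-(α / 2))) B‖ ≤ 1 := by
  have hBspec := ContractionPowerBoundAux.spec_pos hB hBinv
  have hVAB' : ContinuousLinearMap.adjoint V ∘L A ∘L V ≤ B :=
    (ContinuousLinearMap.le_def _ _).mpr hVAB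
  have hT1 := ContractionPowerBoundAux.Tt_one_norm hA hB hBspec hVAB'
  have hTα := ContractionPowerBoundAux.Tt_norm_le_one hV hA hB hBspec hT1 hα0 hα1
  refine ⟨?_, hTα⟩
  have h := (ContractionPowerBoundAux.le_iff_norm_Tt hA hB hBspec hα0).mpr hTα
  exact (ContinuousLinearMap.le_def _ _).mp h
end
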